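/- Let H be a complex Hilbert space and let A be a bounded linear operator on H such that ‖exp(−t•A)‖ ≤ M·e^{−δt} for all t ≥ 0, for some constants M > 0 and δ > 0. If V is a bounded linear operator on H with A ∘ V + V ∘ A = 0, then V = 0. Consequently, for any bounded operators B, C on H there is at most one bounded operator R₀ with A ∘ R₀ + R₀ ∘ A = B ∘ C. -/

import Mathlib

open NormedSpace Nat

lemma exp_semiconj_aux {𝔸 : Type*} [NormedRing 𝔸] [NormedAlgebra ℂ 𝔸] [CompleteSpace 𝔸]
    {a b c : 𝔸} (h : a * b = b * c) : exp a * b = b * exp c := by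
  have hpow : ∀ n : ℕ, a ^ n * b = b * c ^ n := by
    intro n; induction n with
    | zero => simp
    | succ n ih => rw [pow_succ, pow_succ, mul_assoc, h, ← mul_assoc, ih, mul_assoc]
  have hs : Summable fun n : ℕ => (n ! : ℂ)⁻¹ • a ^ n := expSeries_summable' a
  have hs' : Summable fun n : ℕ => (n ! : ℂ)⁻¹ • c ^ n := expSeries_summable' c
  calc exp a * b = (∑' n : ℕ, (n ! : ℂ)⁻¹ • a ^ n) * b := by rw [exp_eq_tsum ℂ]
    _ = ∑' n : ℕ, ((n ! : ℂ)⁻¹ • a ^ n) * b := (hs.tsum_mul_right b).symm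
    _ = ∑' n : ℕ, b * ((n ! : ℂ)⁻¹ • c ^ n) := by
        refine tsum_congr fun n => ?_
        rw [smul_mul_assoc, mul_smul_comm, hpow]
    _ = b * ∑' n : ℕ, (n ! : ℂ)⁻¹ • c ^ n := hs'.tsum_mul_left b
    _ = b * exp c := by rw [exp_eq_tsum ℂ]

set_option synthInstance.maxHeartbeats 1000000 in
/-- Uniqueness of solutions of the Lyapunov equation `A R + R A = B C` when the semigroup
`e^{-tA}` decays exponentially (uniqueness part of Lemma 2.2(i) of the paper). -/
theorem lyapunov_unique
    {H : Type*} [NormedAddCommGroup H] [InnerProductSpace ℂ H] [CompleteSpace H]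
    (A : H →L[ℂ] H) (M δ : ℝ) (hM : 0 < M) (hδ : 0 < δ)
    (hA : ∀ t : ℝ, 0 ≤ t → ‖NormedSpace.exp (-(t • A))‖ ≤ M * Real.exp (-δ * t)) :
    (∀ V : H →L[ℂ] H, A * V + V * A = 0 → V = 0) ∧
    (∀ B C R₀ R₁ : H →L[ℂ] H,
      A * R₀ + R₀ * A = B * C → A * R₁ + R₁ * A = B * C → R₀ = R₁) := by
  have key : ∀ V : H →L[ℂ] H, A * V + V * A = 0 → V = 0 := by
    intro V hV
    have hAV : A * V = V * (-A) := by
      have := eq_neg_of_add_eq_zero_left hV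
      rw [this]; simp [mul_neg]
    -- semiconjugation for the scaled operator
    have hsemi : ∀ t : ℝ, (-(t • A)) * V = V * (t • A) := by
      intro t
      calc (-(t • A)) * V = -(t • (A * V)) := by simp [smul_mul_assoc]
        _ = -(t • (V * (-A))) := by rw [hAV]
        _ = t • (V * A) := by simp [mul_neg]
        _ = V * (t • A) := by simp [mul_smul_comm]
    have hexp : ∀ t : ℝ, exp (-(t • A)) * V = V * exp (t • A) :=
      fun t => exp_semiconj_aux (hsemi t)
    have hinv : ∀ t : ℝ, exp (t • A) * exp (-(t • A)) = 1 := by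
      intro t
      letI : NormedAlgebra ℚ (H →L[ℂ] H) := NormedAlgebra.restrictScalars ℚ ℂ _
      rw [← exp_add_of_commute (Commute.neg_right (Commute.refl (t • A)))]
      simp
    have hconj : ∀ t : ℝ, exp (-(t • A)) * V * exp (-(t • A)) = V := by
      intro t
      rw [hexp t, mul_assoc, hinv t, mul_one]
    have hbound : ∀ t : ℝ, 0 ≤ t → ‖V‖ ≤ M * Real.exp (-δ * t) * (M * Real.exp (-δ * t)) * ‖V‖ := by
      intro t ht
      conv_lhs => rw [← hconj t]
      calc ‖exp (-(t • A)) * V * exp (-(t • A))‖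
          ≤ ‖exp (-(t • A)) * V‖ * ‖exp (-(t • A))‖ := norm_mul_le _ _
        _ ≤ ‖exp (-(t • A))‖ * ‖V‖ * ‖exp (-(t • A))‖ :=
            mul_le_mul_of_nonneg_right (norm_mul_le _ _) (norm_nonneg _)
        _ ≤ (M * Real.exp (-δ * t)) * ‖V‖ * (M * Real.exp (-δ * t)) := by
            have h1 := hA t ht
            have h2 : (0:ℝ) ≤ M * Real.exp (-δ * t) :=
              mul_nonneg hM.le (Real.exp_nonneg _)
            gcongr
        _ = M * Real.exp (-δ * t) * (M * Real.exp (-δ * t)) * ‖V‖ := by ring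
    have htend : Filter.Tendsto
        (fun t : ℝ => M * Real.exp (-δ * t) * (M * Real.exp (-δ * t)) * ‖V‖)
        Filter.atTop (nhds 0) := by
      have he : Filter.Tendsto (fun t : ℝ => Real.exp (-δ * t)) Filter.atTop (nhds 0) := by
        have h1 : Filter.Tendsto (fun t : ℝ => δ * t) Filter.atTop Filter.atTop :=
          Filter.Tendsto.const_mul_atTop hδ Filter.tendsto_id
        have h2 : Filter.Tendsto (fun t : ℝ => -δ * t) Filter.atTop Filter.atBot := by
          simpa [neg_mul] using Filter.tendsto_neg_atBot_iff.mpr h1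
        exact Real.tendsto_exp_atBot.comp h2
      have := ((he.const_mul M).mul (he.const_mul M)).mul_const ‖V‖
      simpa using this
    have hVle : ‖V‖ ≤ 0 :=
      ge_of_tendsto htend (Filter.eventually_atTop.mpr ⟨0, fun t ht => hbound t ht⟩)
    exact norm_le_zero_iff.mp hVle
  refine ⟨key, fun B C R₀ R₁ h₀ h₁ => ?_⟩
  have : A * (R₀ - R₁) + (R₀ - R₁) * A = 0 := by
    rw [mul_sub, sub_mul]
    rw [show A * R₀ - A * R₁ + (R₀ * A - R₁ * A)
        = (A * R₀ + R₀ * A) - (A * R₁ + R₁ * A) by abel, h₀, h₁, sub_self]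
  exact sub_eq_zero.mp (key _ this)
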